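/- Let k ≥ 1 be an integer, t > 0, and let τ₀ < 0 < τ₁ < τ₂ < ⋯ < τ_k ≤ t be real numbers. Then σ²·[(t − τ_k)^{2D} + Σ_{j=1}^{k} (τ_j − τ_{j−1})^{2D} − (−τ₀)^{2D}] ≤ σ²·[2D·(−τ₀)^{2D−1}·t + k·(t/k)^{2D}]. -/

import Mathlib

open Finset

/-- Tangent-line inequality for concave `x ↦ x^p`, `0 ≤ p ≤ 1`. -/
lemma rpow_tangent_le {p a x : ℝ} (hp0 : 0 ≤ p) (hp1 : p ≤ 1) (ha : 0 < a) (hx : 0 ≤ x) :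
    x ^ p ≤ a ^ p + p * a ^ (p - 1) * (x - a) := by
  have hs : (-1 : ℝ) ≤ x / a - 1 := by
    have := div_nonneg hx ha.le; linarith
  have h := rpow_one_add_le_one_add_mul_self hs hp0 hp1
  have hxa : (x / a) ^ p ≤ 1 + p * (x / a - 1) := by
    have h1 : (1 : ℝ) + (x / a - 1) = x / a := by ring
    rwa [h1] at h
  have hap : (0 : ℝ) < a ^ p := Real.rpow_pos_of_pos ha p
  have hdiv : (x / a) ^ p = x ^ p / a ^ p := Real.div_rpow hx ha.le p
  have hsub : a ^ (p - 1) = a ^ p / a := by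
    rw [Real.rpow_sub ha, Real.rpow_one]
  have := mul_le_mul_of_nonneg_left hxa hap.le
  rw [hdiv, mul_div_cancel₀ _ (ne_of_gt hap)] at this
  calc x ^ p ≤ a ^ p * (1 + p * (x / a - 1)) := this
    _ = a ^ p + p * a ^ (p - 1) * (x - a) := by
        rw [hsub]; field_simp

/-- For `k ≥ 1`, `t > 0` and `τ₀ < 0 < τ₁ < ⋯ < τ_k ≤ t`:
`σ²[(t − τ_k)^{2D} + Σ_{j=1}^k (τ_j − τ_{j−1})^{2D} − (−τ₀)^{2D}]
  ≤ σ²[2D(−τ₀)^{2D−1}t + k(t/k)^{2D}]`. -/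
theorem timeChange_pathwise_bound
    (D σ : ℝ) (hD : D ∈ Set.Ioo (0 : ℝ) (1/2)) (hσ : 0 < σ)
    (k : ℕ) (hk : 1 ≤ k) (t : ℝ) (ht : 0 < t)
    (τ : ℕ → ℝ) (hτ0 : τ 0 < 0) (hτ1 : 0 < τ 1)
    (hτmono : ∀ j, j < k → τ j < τ (j + 1)) (hτk : τ k ≤ t) :
    σ^2 * ((t - τ k) ^ (2*D)
        + (∑ j ∈ Finset.range k, (τ (j + 1) - τ j) ^ (2*D))
        - (-τ 0) ^ (2*D))
      ≤ σ^2 * (2*D * (-τ 0) ^ (2*D - 1) * t + k * (t / k) ^ (2*D)) := by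
  obtain ⟨m, rfl⟩ : ∃ m, k = m + 1 := ⟨k - 1, (Nat.succ_pred_eq_of_pos hk).symm⟩
  set p : ℝ := 2 * D with hp
  have hp0 : 0 < p := by have := hD.1; positivity
  have hp1 : p < 1 := by have := hD.2; simp only [hp]; linarith
  -- monotonicity facts
  have hmono1 : ∀ i, i ≤ m → τ 1 ≤ τ (i + 1) := by
    intro i hi
    induction i with
    | zero => exact le_rfl
    | succ n ih =>
        have h1 : τ (n + 1) < τ (n + 2) := hτmono (n + 1) (by omega)
        have h2 := ih (by omega)
        linarith
  have hτ1t : τ 1 ≤ t := le_trans (hmono1 m le_rfl) hτk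
  -- the common tangent point
  set c : ℝ := t / ((m : ℝ) + 1) with hc
  have hcpos : 0 < c := by positivity
  -- bound the first gap term
  have hA : (τ 1 - τ 0) ^ p ≤ (-τ 0) ^ p + p * (-τ 0) ^ (p - 1) * t := by
    have h := rpow_tangent_le hp0.le hp1.le (a := -τ 0) (x := τ 1 - τ 0)
      (by linarith) (by linarith)
    have hpos : 0 < p * (-τ 0) ^ (p - 1) :=
      mul_pos hp0 (Real.rpow_pos_of_pos (by linarith) _)
    nlinarith [mul_le_mul_of_nonneg_left (show τ 1 - τ 0 - -τ 0 ≤ t by linarith) hpos.le]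
  -- bound the remaining terms via Jensen (tangent line at c)
  have hsum : ∑ j ∈ Finset.range m, (τ (j + 1 + 1) - τ (j + 1)) = τ (m + 1) - τ 1 := by
    exact Finset.sum_range_sub (fun j => τ (j + 1)) m
  have hterm : ∀ j ∈ Finset.range m,
      (τ (j + 1 + 1) - τ (j + 1)) ^ p
        ≤ c ^ p + p * c ^ (p - 1) * ((τ (j + 1 + 1) - τ (j + 1)) - c) := by
    intro j hj
    rw [Finset.mem_range] at hj
    exact rpow_tangent_le hp0.le hp1.le hcpos
      (by have := hτmono (j + 1) (by omega); linarith)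
  have hB : (t - τ (m + 1)) ^ p + ∑ j ∈ Finset.range m, (τ (j + 1 + 1) - τ (j + 1)) ^ p
      ≤ ((m : ℝ) + 1) * c ^ p := by
    have h1 := Finset.sum_le_sum hterm
    have h2 := rpow_tangent_le hp0.le hp1.le hcpos (x := t - τ (m + 1)) (by linarith)
    have h3 : ∑ j ∈ Finset.range m,
        (c ^ p + p * c ^ (p - 1) * ((τ (j + 1 + 1) - τ (j + 1)) - c))
        = (m : ℝ) * c ^ p + p * c ^ (p - 1) * ((τ (m + 1) - τ 1) - (m : ℝ) * c) := by
      rw [Finset.sum_add_distrib, Finset.sum_const, Finset.card_range, ← Finset.mul_sum,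
        Finset.sum_sub_distrib, hsum, Finset.sum_const, Finset.card_range]
      push_cast
      ring
    have hct : ((m : ℝ) + 1) * c = t := by
      rw [hc]; field_simp
    have hpos : 0 < p * c ^ (p - 1) := mul_pos hp0 (Real.rpow_pos_of_pos hcpos _)
    have h4 : p * c ^ (p - 1) * ((t - τ (m + 1)) - c)
        + (p * c ^ (p - 1) * ((τ (m + 1) - τ 1) - (m : ℝ) * c)) ≤ 0 := by
      have : ((t - τ (m + 1)) - c) + ((τ (m + 1) - τ 1) - (m : ℝ) * c) = - τ 1 := by
        nlinarith [hct]
      nlinarith [mul_pos hpos hτ1]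
    calc (t - τ (m + 1)) ^ p + ∑ j ∈ Finset.range m, (τ (j + 1 + 1) - τ (j + 1)) ^ p
        ≤ (c ^ p + p * c ^ (p - 1) * ((t - τ (m + 1)) - c))
          + ((m : ℝ) * c ^ p + p * c ^ (p - 1) * ((τ (m + 1) - τ 1) - (m : ℝ) * c)) := by
          rw [← h3]; exact add_le_add h2 h1
      _ ≤ ((m : ℝ) + 1) * c ^ p := by nlinarith [h4]
  -- assemble
  have hsplit : ∑ j ∈ Finset.range (m + 1), (τ (j + 1) - τ j) ^ p
      = (∑ j ∈ Finset.range m, (τ (j + 1 + 1) - τ (j + 1)) ^ p) + (τ 1 - τ 0) ^ p :=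
    Finset.sum_range_succ' (fun j => (τ (j + 1) - τ j) ^ p) m
  have hinner : (t - τ (m + 1)) ^ p
      + (∑ j ∈ Finset.range (m + 1), (τ (j + 1) - τ j) ^ p) - (-τ 0) ^ p
      ≤ p * (-τ 0) ^ (p - 1) * t + ((m : ℝ) + 1) * (t / ((m : ℝ) + 1)) ^ p := by
    rw [hsplit]
    linarith
  have hσ2 : (0 : ℝ) ≤ σ ^ 2 := sq_nonneg σ
  have := mul_le_mul_of_nonneg_left hinner hσ2
  push_cast
  convert this using 3 <;> push_cast <;> ring
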